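/- For all nonnegative integers n, a, Δ with n ≥ 2Δ and Δ ≤ a ≤ n − Δ, every n-vertex bipartite graph G that is a subgraph of K_{a,n−a} whose bipartite complement has maximum degree at most Δ satisfies F(G) ≥ C(n − 2Δ, a − Δ). -/

import Mathlib

def GDiff {V : Type*} (G : SimpleGraph V) (π σ : Equiv.Perm V) : Prop :=
  ∃ i, G.Adj (π i) (σ i)

noncomputable def famF {V : Type*} (G : SimpleGraph V) : ℕ :=
  sSup {k | ∃ S : Finset (Equiv.Perm V), S.card = k ∧
    (S : Set (Equiv.Perm V)).Pairwise (GDiff G)}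

def Kbip (n a : ℕ) : SimpleGraph (Fin n) where
  Adj i j := ((i : ℕ) < a ∧ ¬ (j : ℕ) < a) ∨ ((j : ℕ) < a ∧ ¬ (i : ℕ) < a)
  symm := ⟨fun i j h => Or.symm h⟩
  loopless := ⟨fun i h => by rcases h with ⟨h1, h2⟩ | ⟨h1, h2⟩ <;> exact h2 h1⟩

open Finset in
open scoped Classical in
lemma exists_one_aux {V : Type*} [Nonempty V] (C : Finset V) (m : ℕ) (h : C.card = m) :
    ∃ f : ℕ → V, Set.InjOn f (Set.Iio m) ∧ Set.MapsTo f (Set.Iio m) ↑C := by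
  classical
  subst h
  refine ⟨fun i => if hi : i < C.card then ((C.equivFin.symm ⟨i, hi⟩ : C) : V)
    else Classical.arbitrary V, ?_, ?_⟩
  · intro i hi j hj hij
    simp only [Set.mem_Iio] at hi hj
    simp only [dif_pos hi, dif_pos hj] at hij
    have := C.equivFin.symm.injective (Subtype.coe_injective hij)
    exact congrArg Fin.val this
  · intro i hi
    simp only [Set.mem_Iio] at hi
    simp only [dif_pos hi]
    exact Finset.mem_coe.mpr (C.equivFin.symm ⟨i, hi⟩).2

open Finset in
open scoped Classical in
lemma exists_fam {V : Type*} [Nonempty V] (G : SimpleGraph V) (Δ : ℕ) :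
    ∀ (k s t : ℕ), s + t = k → ∀ (A B : Finset V), Disjoint A B →
      A.card = s + Δ → B.card = t + Δ →
      (∀ x ∈ A, (B.filter fun y => ¬ G.Adj x y).card ≤ Δ) →
      (∀ y ∈ B, (A.filter fun x => ¬ G.Adj x y).card ≤ Δ) →
      ∃ S : Finset (ℕ → V), S.card = (s + t).choose s ∧
        (∀ f ∈ S, Set.InjOn f (Set.Iio (s + t + 2 * Δ)) ∧
          Set.MapsTo f (Set.Iio (s + t + 2 * Δ)) ↑(A ∪ B)) ∧
        (S : Set (ℕ → V)).Pairwise fun f g => ∃ i < s + t + 2 * Δ, G.Adj (f i) (g i) := by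
  intro k
  induction k with
  | zero =>
    intro s t hst A B hAB hA hB _ _
    have hs : s = 0 := by omega
    subst hs
    have hcard : (A ∪ B).card = 0 + t + 2 * Δ := by
      rw [card_union_of_disjoint hAB]; omega
    obtain ⟨f, hf1, hf2⟩ := exists_one_aux (A ∪ B) _ hcard
    refine ⟨{f}, by simp, ?_, by simp⟩
    intro g hg
    rw [Finset.mem_singleton] at hg
    subst hg
    exact ⟨hf1, hf2⟩
  | succ k ih =>
    intro s t hst A B hAB hA hB hdA hdB
    -- base cases s = 0 or t = 0
    have base : s = 0 ∨ t = 0 →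
        ∃ S : Finset (ℕ → V), S.card = (s + t).choose s ∧
        (∀ f ∈ S, Set.InjOn f (Set.Iio (s + t + 2 * Δ)) ∧
          Set.MapsTo f (Set.Iio (s + t + 2 * Δ)) ↑(A ∪ B)) ∧
        (S : Set (ℕ → V)).Pairwise fun f g => ∃ i < s + t + 2 * Δ, G.Adj (f i) (g i) := by
      intro h0
      have hcard : (A ∪ B).card = s + t + 2 * Δ := by
        rw [card_union_of_disjoint hAB]; omega
      obtain ⟨f, hf1, hf2⟩ := exists_one_aux (A ∪ B) _ hcard
      have hch : (s + t).choose s = 1 := by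
        rcases h0 with h0 | h0 <;> subst h0 <;> simp
      refine ⟨{f}, by simp [hch], ?_, by simp⟩
      intro g hg
      rw [Finset.mem_singleton] at hg
      subst hg
      exact ⟨hf1, hf2⟩
    rcases Nat.eq_zero_or_pos s with hs0 | hs
    · exact base (Or.inl hs0)
    rcases Nat.eq_zero_or_pos t with ht0 | ht
    · exact base (Or.inr ht0)
    obtain ⟨s', rfl⟩ : ∃ s', s = s' + 1 := ⟨s - 1, by omega⟩
    obtain ⟨t', rfl⟩ : ∃ t', t = t' + 1 := ⟨t - 1, by omega⟩
    -- pick an edge (l, r) with l ∈ A, r ∈ B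
    obtain ⟨l, hlA⟩ : A.Nonempty := card_pos.mp (by omega)
    obtain ⟨r, hrB, hr⟩ : ∃ r ∈ B, G.Adj l r := by
      by_contra hcon
      push_neg at hcon
      have hsub : B ⊆ B.filter fun y => ¬ G.Adj l y :=
        fun y hy => mem_filter.mpr ⟨hy, hcon y hy⟩
      have := card_le_card hsub
      have := hdA l hlA
      omega
    have hlr : l ≠ r := fun h => (disjoint_left.mp hAB hlA (h ▸ hrB))
    have hlB : l ∉ B := disjoint_left.mp hAB hlA
    have hrA : r ∉ A := disjoint_right.mp hAB hrB
    -- recursive families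
    obtain ⟨S₁, hS₁card, hS₁props, hS₁pair⟩ :=
      ih s' (t' + 1) (by omega) (A.erase l) B (hAB.mono_left (erase_subset _ _))
        (by rw [card_erase_of_mem hlA, hA]; omega) hB
        (fun x hx => hdA x (mem_of_mem_erase hx))
        (fun y hy => le_trans (card_le_card
          (filter_subset_filter _ (erase_subset _ _))) (hdB y hy))
    obtain ⟨S₂, hS₂card, hS₂props, hS₂pair⟩ :=
      ih (s' + 1) t' (by omega) A (B.erase r) (hAB.mono_right (erase_subset _ _))
        hA (by rw [card_erase_of_mem hrB, hB]; omega)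
        (fun x hx => le_trans (card_le_card
          (filter_subset_filter _ (erase_subset _ _))) (hdA x hx))
        (fun y hy => hdB y (mem_of_mem_erase hy))
    set N := s' + 1 + (t' + 1) + 2 * Δ with hN
    -- extension operator
    set ext : V → (ℕ → V) → (ℕ → V) := fun v g i => if i = 0 then v else g (i - 1) with hext
    have hextinj : ∀ v : V, Function.Injective (ext v) := by
      intro v g g' h
      funext i
      have := congrFun h (i + 1)
      simpa [hext] using this
    -- extended functions are injective and map into A ∪ B
    have hkey : ∀ (v : V) (C : Finset V) (g : ℕ → V), v ∈ A ∪ B → v ∉ C → ↑C ⊆ (↑(A ∪ B) : Set V) →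
        Set.InjOn g (Set.Iio (N - 1)) → Set.MapsTo g (Set.Iio (N - 1)) ↑C →
        Set.InjOn (ext v g) (Set.Iio N) ∧ Set.MapsTo (ext v g) (Set.Iio N) ↑(A ∪ B) := by
      intro v C g hv hvC hC hginj hgmap
      constructor
      · intro i hi j hj hij
        simp only [Set.mem_Iio] at hi hj
        rcases Nat.eq_zero_or_pos i with hi0 | hi0 <;> rcases Nat.eq_zero_or_pos j with hj0 | hj0
        · omega
        · exfalso
          subst hi0
          simp only [hext, if_pos rfl, if_neg (by omega : ¬ j = 0)] at hij
          exact hvC (hij ▸ hgmap (show j - 1 ∈ Set.Iio (N - 1) by simp [Set.mem_Iio]; omega))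
        · exfalso
          subst hj0
          simp only [hext, if_pos rfl, if_neg (by omega : ¬ i = 0)] at hij
          exact hvC (hij.symm ▸ hgmap (show i - 1 ∈ Set.Iio (N - 1) by simp [Set.mem_Iio]; omega))
        · simp only [hext, if_neg (by omega : ¬ i = 0), if_neg (by omega : ¬ j = 0)] at hij
          have := hginj (show i - 1 ∈ Set.Iio (N - 1) by simp [Set.mem_Iio]; omega)
            (show j - 1 ∈ Set.Iio (N - 1) by simp [Set.mem_Iio]; omega) hij
          omega
      · intro i hi
        simp only [Set.mem_Iio] at hi
        rcases Nat.eq_zero_or_pos i with hi0 | hi0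
        · subst hi0; simpa [hext] using hv
        · simp only [hext, if_neg (by omega : ¬ i = 0)]
          exact hC (hgmap (show i - 1 ∈ Set.Iio (N - 1) by simp [Set.mem_Iio]; omega))
    have hC₁ : (↑(A.erase l ∪ B) : Set V) ⊆ ↑(A ∪ B) := by
      intro x hx
      simp only [coe_union, Set.mem_union, mem_coe] at hx ⊢
      rcases hx with hx | hx
      · exact Or.inl (mem_of_mem_erase hx)
      · exact Or.inr hx
    have hC₂ : (↑(A ∪ B.erase r) : Set V) ⊆ ↑(A ∪ B) := by
      intro x hx
      simp only [coe_union, Set.mem_union, mem_coe] at hx ⊢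
      rcases hx with hx | hx
      · exact Or.inl hx
      · exact Or.inr (mem_of_mem_erase hx)
    have hl1 : l ∉ A.erase l ∪ B := by simp [hlB]
    have hr2 : r ∉ A ∪ B.erase r := by simp [hrA]
    have hlAB : l ∈ A ∪ B := mem_union_left _ hlA
    have hrAB : r ∈ A ∪ B := mem_union_right _ hrB
    have hN1 : s' + (t' + 1) + 2 * Δ = N - 1 := by omega
    have hN2 : s' + 1 + t' + 2 * Δ = N - 1 := by omega
    refine ⟨S₁.image (ext l) ∪ S₂.image (ext r), ?_, ?_, ?_⟩
    · -- cardinality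
      have hdis : Disjoint (S₁.image (ext l)) (S₂.image (ext r)) := by
        rw [disjoint_left]
        rintro f hf1 hf2
        simp only [mem_image] at hf1 hf2
        obtain ⟨g₁, -, rfl⟩ := hf1
        obtain ⟨g₂, -, hg₂⟩ := hf2
        have := congrFun hg₂ 0
        simp only [hext, if_pos rfl] at this
        exact hlr (by rw [this])
      rw [card_union_of_disjoint hdis, card_image_of_injective _ (hextinj l),
        card_image_of_injective _ (hextinj r), hS₁card, hS₂card]
      have e1 : s' + (t' + 1) = s' + t' + 1 := by omega
      have e2 : s' + 1 + t' = s' + t' + 1 := by omega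
      have e3 : s' + 1 + (t' + 1) = (s' + t' + 1) + 1 := by omega
      rw [e1, e2, e3]
      exact (Nat.choose_succ_succ (s' + t' + 1) s').symm
    · -- injectivity and range
      intro f hf
      simp only [mem_union, mem_image] at hf
      rcases hf with ⟨g, hg, rfl⟩ | ⟨g, hg, rfl⟩
      · obtain ⟨hg1, hg2⟩ := hS₁props g hg
        exact hkey l (A.erase l ∪ B) g hlAB hl1 hC₁ (hN1 ▸ hg1) (hN1 ▸ hg2)
      · obtain ⟨hg1, hg2⟩ := hS₂props g hg
        exact hkey r (A ∪ B.erase r) g hrAB hr2 hC₂ (hN2 ▸ hg1) (hN2 ▸ hg2)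
    · -- pairwise collision
      intro f hf f' hf' hne
      simp only [coe_union, Set.mem_union, coe_image, Set.mem_image, mem_coe] at hf hf'
      have hcross : ∀ (u v : V) (g g' : ℕ → V), G.Adj u v →
          ∃ i < N, G.Adj (ext u g i) (ext v g' i) := by
        intro u v g g' huv
        exact ⟨0, by omega, by simpa [hext] using huv⟩
      rcases hf with ⟨g₁, hg₁, rfl⟩ | ⟨g₁, hg₁, rfl⟩ <;>
        rcases hf' with ⟨g₂, hg₂, rfl⟩ | ⟨g₂, hg₂, rfl⟩
      · have hgg : g₁ ≠ g₂ := fun h => hne (by rw [h])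
        obtain ⟨i, hi, hadj⟩ := hS₁pair hg₁ hg₂ hgg
        refine ⟨i + 1, by omega, ?_⟩
        simpa [hext] using hadj
      · exact hcross l r g₁ g₂ hr
      · exact hcross r l g₁ g₂ hr.symm
      · have hgg : g₁ ≠ g₂ := fun h => hne (by rw [h])
        obtain ⟨i, hi, hadj⟩ := hS₂pair hg₁ hg₂ hgg
        refine ⟨i + 1, by omega, ?_⟩
        simpa [hext] using hadj

open scoped Classical in
noncomputable def toPermAux {n : ℕ} (f : ℕ → Fin n) : Equiv.Perm (Fin n) :=
  if h : Function.Injective (fun i : Fin n => f i.val) then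
    Equiv.ofBijective _ (Finite.injective_iff_bijective.mp h) else 1

lemma toPermAux_apply {n : ℕ} (f : ℕ → Fin n)
    (h : Function.Injective fun i : Fin n => f i.val) (i : Fin n) :
    toPermAux f i = f i.val := by
  rw [toPermAux, dif_pos h]
  rfl

/-- For `n ≥ 2Δ` and `Δ ≤ a ≤ n − Δ`, every `n`-vertex bipartite subgraph `G`
of `K_{a,n−a}` whose bipartite complement has maximum degree at most `Δ`
satisfies `F(G) ≥ C(n − 2Δ, a − Δ)`. -/
theorem stmt6 (n a Δ : ℕ) (h1 : 2 * Δ ≤ n) (h2 : Δ ≤ a) (h3 : a ≤ n - Δ)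
    (G : SimpleGraph (Fin n)) (hsub : G ≤ Kbip n a)
    (hdeg : ∀ v : Fin n,
      ({w : Fin n | (Kbip n a).Adj v w ∧ ¬ G.Adj v w} : Set (Fin n)).ncard ≤ Δ) :
    (n - 2 * Δ).choose (a - Δ) ≤ famF G := by
  classical
  have hbdd : BddAbove {k | ∃ S : Finset (Equiv.Perm (Fin n)), S.card = k ∧
      (S : Set (Equiv.Perm (Fin n))).Pairwise (GDiff G)} := by
    refine ⟨Fintype.card (Equiv.Perm (Fin n)), ?_⟩
    rintro k ⟨S, rfl, -⟩
    exact S.card_le_univ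
  rcases Nat.eq_zero_or_pos n with hn | hn
  · subst hn
    have ha : a = 0 := by omega
    have hΔ : Δ = 0 := by omega
    subst ha; subst hΔ
    simp only [Nat.sub_zero, Nat.choose_self, Nat.mul_zero]
    refine le_csSup hbdd ?_
    exact ⟨{1}, by simp, by simp⟩
  haveI : Nonempty (Fin n) := ⟨⟨0, hn⟩⟩
  have hΔn : Δ ≤ n := by omega
  have haΔ : a + Δ ≤ n := by
    have := (Nat.le_sub_iff_add_le hΔn).mp h3
    omega
  have han : a ≤ n := by omega
  set A : Finset (Fin n) := Finset.univ.filter (fun i : Fin n => (i : ℕ) < a) with hAdef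
  set B : Finset (Fin n) := Finset.univ.filter (fun i : Fin n => ¬ (i : ℕ) < a) with hBdef
  have hAcard : A.card = a := by
    have : A = (Finset.univ : Finset (Fin a)).map
        ⟨Fin.castLE han, Fin.castLE_injective han⟩ := by
      ext i
      simp only [hAdef, Finset.mem_filter, Finset.mem_univ, true_and, Finset.mem_map,
        Function.Embedding.coeFn_mk]
      constructor
      · intro hi
        exact ⟨⟨i, hi⟩, Fin.ext rfl⟩
      · rintro ⟨j, rfl⟩
        exact j.2
    rw [this, Finset.card_map, Finset.card_univ, Fintype.card_fin]
  have hABcard : A.card + B.card = n := by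
    have := Finset.card_filter_add_card_filter_not
      (s := Finset.univ) (p := fun i : Fin n => (i : ℕ) < a)
    simpa [hAdef, hBdef] using this
  have hBcard : B.card = n - a := by omega
  have hdisjAB : Disjoint A B := Finset.disjoint_filter_filter_not _ _ _
  -- degree conditions
  have hdA : ∀ x ∈ A, (B.filter fun y => ¬ G.Adj x y).card ≤ Δ := by
    intro x hx
    have hx' : (x : ℕ) < a := (Finset.mem_filter.mp hx).2
    have hset : {w : Fin n | (Kbip n a).Adj x w ∧ ¬ G.Adj x w} =
        ↑(Finset.univ.filter fun w => (Kbip n a).Adj x w ∧ ¬ G.Adj x w) := by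
      ext w; simp
    have h1' : (Finset.univ.filter fun w => (Kbip n a).Adj x w ∧ ¬ G.Adj x w).card ≤ Δ := by
      have := hdeg x
      rwa [hset, Set.ncard_coe_finset] at this
    refine le_trans (Finset.card_le_card ?_) h1'
    intro y hy
    simp only [hBdef, Finset.mem_filter, Finset.mem_univ, true_and] at hy ⊢
    exact ⟨Or.inl ⟨hx', hy.1⟩, hy.2⟩
  have hdB : ∀ y ∈ B, (A.filter fun x => ¬ G.Adj x y).card ≤ Δ := by
    intro y hy
    have hy' : ¬ (y : ℕ) < a := (Finset.mem_filter.mp hy).2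
    have hset : {w : Fin n | (Kbip n a).Adj y w ∧ ¬ G.Adj y w} =
        ↑(Finset.univ.filter fun w => (Kbip n a).Adj y w ∧ ¬ G.Adj y w) := by
      ext w; simp
    have h1' : (Finset.univ.filter fun w => (Kbip n a).Adj y w ∧ ¬ G.Adj y w).card ≤ Δ := by
      have := hdeg y
      rwa [hset, Set.ncard_coe_finset] at this
    refine le_trans (Finset.card_le_card ?_) h1'
    intro x hx
    simp only [hAdef, Finset.mem_filter, Finset.mem_univ, true_and] at hx ⊢
    refine ⟨Or.inr ⟨hx.1, hy'⟩, fun h => hx.2 h.symm⟩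
  set s := a - Δ with hs
  set t := n - a - Δ with ht
  have hsΔ : A.card = s + Δ := by omega
  have htΔ : B.card = t + Δ := by omega
  have hstn : s + t + 2 * Δ = n := by omega
  obtain ⟨S, hScard, hSprops, hSpair⟩ :=
    exists_fam G Δ (s + t) s t rfl A B hdisjAB hsΔ htΔ hdA hdB
  -- convert to permutations
  have hinj : ∀ f ∈ S, Function.Injective (fun i : Fin n => f i.val) := by
    intro f hf p q hpq
    have h := (hSprops f hf).1
    refine Fin.ext (h ?_ ?_ hpq) <;> · simp only [Set.mem_Iio]; omega
  have hΦ : ∀ f ∈ S, ∀ i : Fin n, toPermAux f i = f i.val := fun f hf i =>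
    toPermAux_apply f (hinj f hf) i
  set T : Finset (Equiv.Perm (Fin n)) := S.image toPermAux with hTdef
  have hTcard : T.card = S.card := by
    rw [hTdef]
    apply Finset.card_image_of_injOn
    intro f hf f' hf' h
    by_contra hne
    obtain ⟨i, hi, hadj⟩ := hSpair hf hf' hne
    have hi' : i < n := by omega
    have h2' : toPermAux f ⟨i, hi'⟩ = toPermAux f' ⟨i, hi'⟩ := by rw [h]
    rw [hΦ f hf, hΦ f' hf'] at h2'
    exact hadj.ne h2'
  have hTpair : (T : Set (Equiv.Perm (Fin n))).Pairwise (GDiff G) := by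
    intro π hπ π' hπ' hne
    simp only [hTdef, Finset.coe_image, Set.mem_image, Finset.mem_coe] at hπ hπ'
    obtain ⟨f, hf, rfl⟩ := hπ
    obtain ⟨f', hf', rfl⟩ := hπ'
    have hff : f ≠ f' := fun h => hne (by rw [h])
    obtain ⟨i, hi, hadj⟩ := hSpair hf hf' hff
    have hi' : i < n := by omega
    refine ⟨⟨i, hi'⟩, ?_⟩
    rw [hΦ f hf, hΦ f' hf']
    exact hadj
  refine le_csSup hbdd ?_
  refine ⟨T, ?_, hTpair⟩
  rw [hTcard, hScard]
  congr 1
  omega
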